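/- For every C_θ > 0 there exists a constant K > 0, depending only on C_θ, with the following property. Let T ≥ 2 be an integer, g_o ≥ 1 real, A a nonempty finite set, and for each a ∈ A and t ∈ {1,…,T} let w_a^t ∈ [1, g_o] be real; set n_a^t := ⌊w_a^t⌋, V_a^0 := 1, V_a^t := 1 + Σ_{j=1}^{t} n_a^j (w_a^j)², and γ_a^t := C_θ + sqrt(2 ln T + 2 ln V_a^{t−1}). Suppose δ_a^t are reals with 0 ≤ δ_a^t ≤ min{ C_θ, 2γ_a^t / sqrt(V_a^{t−1}) } for all a and t. Then Σ_{t=1}^{T} Σ_{a∈A} δ_a^t · (w_a^t)² ≤ K · g_o² · |A| · sqrt(T) · ln(T·g_o). -/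

import Mathlib

set_option maxHeartbeats 1600000

private lemma sum_Icc_one_eq_range (f : ℕ → ℝ) (T : ℕ) :
    ∑ t ∈ Finset.Icc 1 T, f t = ∑ i ∈ Finset.range T, f (i + 1) := by
  induction T with
  | zero => simp
  | succ n ih =>
      rw [Finset.sum_Icc_succ_top (Nat.le_add_left 1 n), ih, Finset.sum_range_succ]

/-- (Lemma 10 of the paper, the bound on the regret component `R₁`, in
deterministic form.) For every `C_θ > 0` there is `K > 0` depending only on `C_θ` such that,
with flows `w_a^t ∈ [1, g_o]`, design sums `V_a^t = 1 + Σ_{j≤t} ⌊w_a^j⌋ (w_a^j)²`, radii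
`γ_a^t = C_θ + √(2 ln T + 2 ln V_a^{t−1})`, and any reals
`0 ≤ δ_a^t ≤ min{C_θ, 2γ_a^t/√(V_a^{t−1})}`, one has
`Σ_{t=1}^T Σ_a δ_a^t (w_a^t)² ≤ K g_o² |A| √T ln(T g_o)`. -/
theorem stmt_12 (Cθ : ℝ) (hCθ : 0 < Cθ) :
    ∃ K : ℝ, 0 < K ∧
      ∀ (T : ℕ), 2 ≤ T → ∀ (go : ℝ), 1 ≤ go → ∀ (n : ℕ), 1 ≤ n →
      ∀ (w : ℕ → Fin n → ℝ),
        (∀ t ∈ Finset.Icc 1 T, ∀ a, 1 ≤ w t a ∧ w t a ≤ go) →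
      ∀ (V : ℕ → Fin n → ℝ),
        (∀ t a, V t a = 1 + ∑ j ∈ Finset.Icc 1 t, (⌊w j a⌋₊ : ℝ) * (w j a) ^ 2) →
      ∀ (γ : ℕ → Fin n → ℝ),
        (∀ t a, γ t a = Cθ + Real.sqrt (2 * Real.log T + 2 * Real.log (V (t - 1) a))) →
      ∀ (δ : ℕ → Fin n → ℝ),
        (∀ t ∈ Finset.Icc 1 T, ∀ a,
          0 ≤ δ t a ∧ δ t a ≤ min Cθ (2 * γ t a / Real.sqrt (V (t - 1) a))) →
      ∑ t ∈ Finset.Icc 1 T, ∑ a : Fin n, δ t a * (w t a) ^ 2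
        ≤ K * go ^ 2 * (n : ℝ) * Real.sqrt T * Real.log ((T : ℝ) * go) := by
  refine ⟨100 * (Cθ + 1), by positivity, ?_⟩
  intro T hT go hgo n hn w hw V hV γ hγ δ hδ
  set L := Real.log ((T : ℝ) * go) with hLdef
  clear_value L
  have hT2 : (2 : ℝ) ≤ (T : ℝ) := by exact_mod_cast hT
  have hTpos : (0 : ℝ) < (T : ℝ) := by linarith
  have hgo0 : (0 : ℝ) < go := by linarith
  have hTgo : (2 : ℝ) ≤ (T : ℝ) * go := by nlinarith
  have hL2 : Real.log 2 ≤ L := hLdef ▸ Real.log_le_log (by norm_num) (by linarith)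
  have hlog2pos : (0 : ℝ) < Real.log 2 := Real.log_pos (by norm_num)
  have hlog2half : (1 : ℝ) / 2 ≤ Real.log 2 := by
    have := Real.log_two_gt_d9; linarith
  have hLpos : 0 < L := lt_of_lt_of_le hlog2pos hL2
  have hsqT1 : (1 : ℝ) ≤ Real.sqrt T := by
    rw [show (1 : ℝ) = Real.sqrt 1 by simp]
    exact Real.sqrt_le_sqrt (by linarith)
  have hsqLL : Real.sqrt L ≤ 2 * L := by
    have h1 : L ≤ (2 * L) ^ 2 := by nlinarith
    calc Real.sqrt L ≤ Real.sqrt ((2 * L) ^ 2) := Real.sqrt_le_sqrt h1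
      _ = 2 * L := Real.sqrt_sq (by linarith)
  have hsq2 : Real.sqrt 2 ≤ (3 : ℝ) / 2 := by
    calc Real.sqrt 2 ≤ Real.sqrt ((3 / 2) ^ 2) := Real.sqrt_le_sqrt (by norm_num)
      _ = 3 / 2 := Real.sqrt_sq (by norm_num)
  have hsq8 : Real.sqrt 8 ≤ (3 : ℝ) := by
    calc Real.sqrt 8 ≤ Real.sqrt (3 ^ 2) := Real.sqrt_le_sqrt (by norm_num)
      _ = 3 := Real.sqrt_sq (by norm_num)
  set Γ : ℝ := Cθ + Real.sqrt (8 * L) with hΓdef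
  clear_value Γ
  have hΓ0 : 0 ≤ Γ := by rw [hΓdef]; positivity
  -- per-arc bound
  have harc : ∀ a : Fin n, ∑ t ∈ Finset.Icc 1 T, δ t a * (w t a) ^ 2
      ≤ 100 * (Cθ + 1) * go ^ 2 * Real.sqrt T * L := by
    intro a
    have hV1 : ∀ j, (1 : ℝ) ≤ V j a := by
      intro j
      rw [hV]
      have : (0:ℝ) ≤ ∑ j ∈ Finset.Icc 1 j, (⌊w j a⌋₊ : ℝ) * (w j a) ^ 2 :=
        Finset.sum_nonneg (fun i _ => by positivity)
      linarith
    have hVmono : ∀ i j : ℕ, i ≤ j → V i a ≤ V j a := by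
      intro i j hij
      rw [hV, hV]
      have h := Finset.sum_le_sum_of_subset_of_nonneg
        (f := fun k => (⌊w k a⌋₊ : ℝ) * (w k a) ^ 2)
        (Finset.Icc_subset_Icc_right (a := 1) hij)
        (fun k _ _ => mul_nonneg (Nat.cast_nonneg _) (sq_nonneg _))
      linarith
    have hVstep : ∀ i : ℕ, V (i + 1) a = V i a + (⌊w (i+1) a⌋₊ : ℝ) * (w (i+1) a) ^ 2 := by
      intro i
      rw [hV, hV, Finset.sum_Icc_succ_top (Nat.le_add_left 1 i)]
      ring
    have hVTa : V T a ≤ 1 + (T : ℝ) * go ^ 3 := by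
      have hb : ∀ j ∈ Finset.Icc 1 T, (⌊w j a⌋₊ : ℝ) * (w j a) ^ 2 ≤ go ^ 3 := by
        intro j hj
        obtain ⟨h1, h2⟩ := hw j hj a
        have hf : (⌊w j a⌋₊ : ℝ) ≤ w j a := Nat.floor_le (by linarith)
        have hsq : (w j a) ^ 2 ≤ go ^ 2 := by nlinarith
        nlinarith
      have := Finset.sum_le_card_nsmul (Finset.Icc 1 T) _ (go ^ 3) hb
      rw [Nat.card_Icc] at this
      simp only [Nat.add_sub_cancel, nsmul_eq_mul] at this
      rw [hV]; linarith
    have hgo3 : (1:ℝ) ≤ go ^ 3 := one_le_pow₀ hgo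
    have hCgo : (1:ℝ) ≤ (T : ℝ) * go ^ 3 := by nlinarith
    have hVT2 : V T a ≤ 2 * (T : ℝ) * go ^ 3 := by linarith
    have hVT3 : V T a ≤ ((T : ℝ) * go) ^ 3 := by
      have hT4 : (4:ℝ) ≤ (T:ℝ) ^ 2 := by nlinarith
      have hA : (2:ℝ) * T ≤ (T:ℝ) ^ 3 := by
        nlinarith [mul_nonneg (le_of_lt hTpos) (by linarith : (0:ℝ) ≤ (T:ℝ) ^ 2 - 4)]
      have hB : (2:ℝ) * (T:ℝ) * go ^ 3 ≤ (T:ℝ) ^ 3 * go ^ 3 := by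
        nlinarith [pow_pos hgo0 3]
      have hD : ((T:ℝ) * go) ^ 3 = (T:ℝ) ^ 3 * go ^ 3 := by ring
      linarith
    have hlogVT : Real.log (V T a) ≤ 3 * L := by
      calc Real.log (V T a) ≤ Real.log (((T : ℝ) * go) ^ 3) :=
            Real.log_le_log (by linarith [hV1 T]) hVT3
        _ = 3 * L := by rw [hLdef, Real.log_pow]; push_cast; ring
    have hγΓ : ∀ t ∈ Finset.Icc 1 T, γ t a ≤ Γ := by
      intro t ht
      rw [hγ, hΓdef]
      have h1 : Real.log (T : ℝ) ≤ L := hLdef ▸ Real.log_le_log hTpos (by nlinarith)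
      have h2 : Real.log (V (t - 1) a) ≤ 3 * L := by
        have := hVmono (t - 1) T (le_trans (Nat.sub_le t 1) (Finset.mem_Icc.mp ht).2)
        calc Real.log (V (t-1) a) ≤ Real.log (V T a) :=
              Real.log_le_log (by linarith [hV1 (t-1)]) this
          _ ≤ 3 * L := hlogVT
      exact add_le_add_right (Real.sqrt_le_sqrt (by linarith)) Cθ
    -- per step bound
    have hstep : ∀ i, i < T → δ (i+1) a * (w (i+1) a) ^ 2
        ≤ (Cθ * go ^ 2 / Real.log 2) * (Real.log (V (i+1) a) - Real.log (V i a))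
          + 6 * Γ * (Real.sqrt (V (i+1) a) - Real.sqrt (V i a)) := by
      intro i hi
      have ht : i + 1 ∈ Finset.Icc 1 T := Finset.mem_Icc.mpr ⟨Nat.le_add_left 1 i, hi⟩
      obtain ⟨hw1, hw2⟩ := hw (i+1) ht a
      obtain ⟨hδ0, hδ1⟩ := hδ (i+1) ht a
      simp only [Nat.add_sub_cancel] at hδ1
      set Δ : ℝ := (⌊w (i+1) a⌋₊ : ℝ) * (w (i+1) a) ^ 2 with hΔdef
      clear_value Δ
      have hΔ0 : 0 ≤ Δ := by rw [hΔdef]; positivity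
      have hfl1 : (1 : ℝ) ≤ (⌊w (i+1) a⌋₊ : ℝ) := by
        have : 1 ≤ ⌊w (i+1) a⌋₊ := Nat.le_floor (by exact_mod_cast hw1)
        exact_mod_cast this
      have hΔw : (w (i+1) a) ^ 2 ≤ Δ := by
        rw [hΔdef]; nlinarith [hfl1, sq_nonneg (w (i+1) a)]
      have hVi1 := hV1 i
      have hVs : V (i+1) a = V i a + Δ := by rw [hΔdef]; exact hVstep i
      have hsVi : 0 < Real.sqrt (V i a) := Real.sqrt_pos.mpr (by linarith)
      have hsVi1 : 0 < Real.sqrt (V (i+1) a) := Real.sqrt_pos.mpr (by linarith [hV1 (i+1)])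
      have hmonoV : V i a ≤ V (i+1) a := by rw [hVs]; linarith
      have hlmono : Real.log (V i a) ≤ Real.log (V (i+1) a) :=
        Real.log_le_log (by linarith) hmonoV
      have hsmono : Real.sqrt (V i a) ≤ Real.sqrt (V (i+1) a) := Real.sqrt_le_sqrt hmonoV
      rcases le_total Δ (V i a) with hc | hc
      · -- small increment case
        have hs2 : Real.sqrt (V (i+1) a) ≤ Real.sqrt 2 * Real.sqrt (V i a) := by
          rw [← Real.sqrt_mul (by norm_num)]
          exact Real.sqrt_le_sqrt (by rw [hVs]; linarith)
        have hsqVi : Real.sqrt (V i a) ^ 2 = V i a := Real.sq_sqrt (by linarith)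
        have hsqVi1 : Real.sqrt (V (i+1) a) ^ 2 = V (i+1) a :=
          Real.sq_sqrt (by linarith [hV1 (i+1)])
        have hs15 : Real.sqrt (V (i+1) a) ≤ 3 / 2 * Real.sqrt (V i a) := by
          have := mul_le_mul_of_nonneg_right hsq2 (le_of_lt hsVi)
          linarith
        have hsed : Δ ≤ 3 * (Real.sqrt (V (i+1) a) - Real.sqrt (V i a)) * Real.sqrt (V i a) := by
          have hkey : (0:ℝ) ≤ (Real.sqrt (V (i+1) a) - Real.sqrt (V i a))
              * (2 * Real.sqrt (V i a) - Real.sqrt (V (i+1) a)) :=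
            mul_nonneg (sub_nonneg.mpr hsmono) (by linarith [hs15, hsVi])
          nlinarith [hkey, hsqVi, hsqVi1, hVs]
        have hγ0 : 0 ≤ γ (i+1) a := by
          rw [hγ]
          have : 0 ≤ Real.sqrt (2 * Real.log T + 2 * Real.log (V (i+1-1) a)) :=
            Real.sqrt_nonneg _
          linarith
        have hγt := hγΓ (i+1) ht
        have hδ2 : δ (i+1) a ≤ 2 * γ (i+1) a / Real.sqrt (V i a) :=
          le_trans hδ1 (min_le_right _ _)
        have hδs : δ (i+1) a * Real.sqrt (V i a) ≤ 2 * γ (i+1) a :=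
          (le_div_iff₀ hsVi).mp hδ2
        have h1 : δ (i+1) a * (w (i+1) a) ^ 2 * Real.sqrt (V i a) ≤ 2 * γ (i+1) a * Δ := by
          have h1a := mul_le_mul_of_nonneg_right hδs (sq_nonneg (w (i+1) a))
          have h1b := mul_le_mul_of_nonneg_left hΔw
            (by linarith [hγ0] : (0:ℝ) ≤ 2 * γ (i+1) a)
          linarith
        have h2 : 2 * γ (i+1) a * Δ ≤ 2 * Γ * Δ :=
          mul_le_mul_of_nonneg_right (by linarith) hΔ0
        have h3 : 2 * Γ * Δ
            ≤ 6 * Γ * (Real.sqrt (V (i+1) a) - Real.sqrt (V i a)) * Real.sqrt (V i a) := by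
          have := mul_le_mul_of_nonneg_left hsed (by linarith : (0:ℝ) ≤ 2 * Γ)
          linarith
        have key : δ (i+1) a * (w (i+1) a) ^ 2
            ≤ 6 * Γ * (Real.sqrt (V (i+1) a) - Real.sqrt (V i a)) :=
          le_of_mul_le_mul_right (by linarith) hsVi
        have hfirst : 0 ≤ (Cθ * go ^ 2 / Real.log 2)
            * (Real.log (V (i+1) a) - Real.log (V i a)) :=
          mul_nonneg (by positivity) (by linarith)
        linarith
      · -- big increment case: V doubles
        have hVd : 2 * V i a ≤ V (i+1) a := by rw [hVs]; linarith
        have hld : Real.log 2 ≤ Real.log (V (i+1) a) - Real.log (V i a) := by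
          have hm : Real.log (2 * V i a) ≤ Real.log (V (i+1) a) :=
            Real.log_le_log (by linarith) hVd
          rw [Real.log_mul (by norm_num) (by linarith)] at hm
          linarith
        have hδC : δ (i+1) a * (w (i+1) a) ^ 2 ≤ Cθ * go ^ 2 := by
          have hm := le_trans hδ1 (min_le_left _ _)
          have hw2' : (w (i+1) a) ^ 2 ≤ go ^ 2 := by nlinarith [hw1, hw2]
          exact mul_le_mul hm hw2' (sq_nonneg _) (le_of_lt hCθ)
        have ht1 : Cθ * go ^ 2 ≤ (Cθ * go ^ 2 / Real.log 2)
            * (Real.log (V (i+1) a) - Real.log (V i a)) := by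
          rw [div_mul_eq_mul_div, le_div_iff₀ hlog2pos]
          have := mul_le_mul_of_nonneg_left hld
            (le_of_lt (mul_pos hCθ (pow_pos hgo0 2)))
          linarith
        have hsnn : 0 ≤ 6 * Γ * (Real.sqrt (V (i+1) a) - Real.sqrt (V i a)) :=
          mul_nonneg (by linarith) (by linarith)
        linarith
    -- telescoping
    have hV0 : V 0 a = 1 := by rw [hV]; simp
    have hsum : ∑ t ∈ Finset.Icc 1 T, δ t a * (w t a) ^ 2
        ≤ (Cθ * go ^ 2 / Real.log 2) * Real.log (V T a)
          + 6 * Γ * (Real.sqrt (V T a) - 1) := by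
      calc ∑ t ∈ Finset.Icc 1 T, δ t a * (w t a) ^ 2
          = ∑ i ∈ Finset.range T, δ (i+1) a * (w (i+1) a) ^ 2 :=
            sum_Icc_one_eq_range _ T
        _ ≤ ∑ i ∈ Finset.range T,
              ((Cθ * go ^ 2 / Real.log 2) * (Real.log (V (i+1) a) - Real.log (V i a))
                + 6 * Γ * (Real.sqrt (V (i+1) a) - Real.sqrt (V i a))) :=
            Finset.sum_le_sum (fun i hi => hstep i (Finset.mem_range.mp hi))
        _ = (Cθ * go ^ 2 / Real.log 2) * (Real.log (V T a) - Real.log (V 0 a))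
              + 6 * Γ * (Real.sqrt (V T a) - Real.sqrt (V 0 a)) := by
            rw [Finset.sum_add_distrib, ← Finset.mul_sum, ← Finset.mul_sum,
              Finset.sum_range_sub (fun i => Real.log (V i a)),
              Finset.sum_range_sub (fun i => Real.sqrt (V i a))]
        _ = (Cθ * go ^ 2 / Real.log 2) * Real.log (V T a)
              + 6 * Γ * (Real.sqrt (V T a) - 1) := by
            rw [hV0, Real.log_one, Real.sqrt_one]; ring
    -- bound the telescoped quantities
    have hsVT : Real.sqrt (V T a) ≤ Real.sqrt 2 * Real.sqrt T * go ^ 2 := by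
      have h1 : V T a ≤ 2 * (T : ℝ) * go ^ 4 := by
        have hp : go ^ 3 ≤ go ^ 4 := pow_le_pow_right₀ hgo (by norm_num)
        have := mul_le_mul_of_nonneg_left hp (by positivity : (0:ℝ) ≤ 2 * (T:ℝ))
        nlinarith [hVT2]
      have h2 : (Real.sqrt 2 * Real.sqrt T * go ^ 2) ^ 2 = 2 * (T : ℝ) * go ^ 4 := by
        have e2 : Real.sqrt 2 ^ 2 = 2 := Real.sq_sqrt (by norm_num)
        have eT : Real.sqrt (T : ℝ) ^ 2 = (T : ℝ) := Real.sq_sqrt (by linarith)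
        rw [mul_pow, mul_pow, e2, eT]; ring
      calc Real.sqrt (V T a) ≤ Real.sqrt ((Real.sqrt 2 * Real.sqrt T * go ^ 2) ^ 2) :=
            Real.sqrt_le_sqrt (by rw [h2]; exact h1)
        _ = Real.sqrt 2 * Real.sqrt T * go ^ 2 :=
            Real.sqrt_sq (by positivity)
    have hΓbound : Γ ≤ Cθ + 6 * L := by
      rw [hΓdef]
      have h8 : Real.sqrt (8 * L) = Real.sqrt 8 * Real.sqrt L := Real.sqrt_mul (by norm_num) L
      have h9 := mul_le_mul_of_nonneg_right hsq8 (Real.sqrt_nonneg L)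
      rw [h8]
      linarith [hsqLL]
    have hterm1 : (Cθ * go ^ 2 / Real.log 2) * Real.log (V T a)
        ≤ 6 * Cθ * go ^ 2 * Real.sqrt T * L := by
      have hd : Cθ * go ^ 2 / Real.log 2 ≤ 2 * (Cθ * go ^ 2) := by
        rw [div_le_iff₀ hlog2pos]
        nlinarith [mul_pos hCθ (pow_pos hgo0 2)]
      have hlg0 : 0 ≤ Real.log (V T a) := Real.log_nonneg (hV1 T)
      have h1 : (Cθ * go ^ 2 / Real.log 2) * Real.log (V T a)
          ≤ 2 * (Cθ * go ^ 2) * (3 * L) := by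
        have := mul_le_mul hd hlogVT hlg0 (by positivity)
        linarith
      have h2 : (0:ℝ) ≤ 6 * Cθ * go ^ 2 * L * (Real.sqrt T - 1) :=
        mul_nonneg (by positivity) (by linarith)
      linarith
    have hterm2 : 6 * Γ * (Real.sqrt (V T a) - 1)
        ≤ 6 * (Cθ + 6 * L) * (3 / 2 * Real.sqrt T * go ^ 2) := by
      have hs1 : Real.sqrt (V T a) - 1 ≤ 3 / 2 * Real.sqrt T * go ^ 2 := by
        have h15 := mul_le_mul_of_nonneg_right hsq2
          (by positivity : (0:ℝ) ≤ Real.sqrt T * go ^ 2)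
        nlinarith [hsVT, h15]
      have hs0 : (0:ℝ) ≤ Real.sqrt (V T a) - 1 := by
        have : (1:ℝ) = Real.sqrt 1 := by simp
        rw [this]
        linarith [Real.sqrt_le_sqrt (hV1 T)]
      have := mul_le_mul hΓbound hs1 hs0 (by positivity)
      linarith
    have hfin : 6 * (Cθ + 6 * L) * (3 / 2 * Real.sqrt T * go ^ 2)
        ≤ (18 * Cθ + 54 * L + 54 * Cθ * L) * Real.sqrt T * go ^ 2 := by
      have h0 : (0:ℝ) ≤ Real.sqrt T * go ^ 2 := by positivity
      have h1 : (0:ℝ) ≤ (9 * Cθ + 54 * Cθ * L) * (Real.sqrt T * go ^ 2) :=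
        mul_nonneg (by positivity) h0
      nlinarith [h1]
    have hCL : Cθ ≤ 2 * Cθ * L := by nlinarith
    calc ∑ t ∈ Finset.Icc 1 T, δ t a * (w t a) ^ 2
        ≤ (Cθ * go ^ 2 / Real.log 2) * Real.log (V T a)
          + 6 * Γ * (Real.sqrt (V T a) - 1) := hsum
      _ ≤ 6 * Cθ * go ^ 2 * Real.sqrt T * L
          + (18 * Cθ + 54 * L + 54 * Cθ * L) * Real.sqrt T * go ^ 2 := by
          linarith [hterm1, hterm2, hfin]
      _ ≤ 100 * (Cθ + 1) * go ^ 2 * Real.sqrt T * L := by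
          have h0 : (0:ℝ) ≤ Real.sqrt T * go ^ 2 := by positivity
          have h2 : (0:ℝ) ≤ ((90 * Cθ + 54) * L - (18 * Cθ + 54 * L + 54 * Cθ * L))
              * (Real.sqrt T * go ^ 2) :=
            mul_nonneg (by linarith [hCL]) h0
          have h3 : (0:ℝ) ≤ (100 * (Cθ + 1) - (96 * Cθ + 54)) * (go ^ 2 * Real.sqrt T * L) :=
            mul_nonneg (by linarith) (by positivity)
          nlinarith [h2, h3]
  -- assemble
  calc ∑ t ∈ Finset.Icc 1 T, ∑ a : Fin n, δ t a * (w t a) ^ 2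
      = ∑ a : Fin n, ∑ t ∈ Finset.Icc 1 T, δ t a * (w t a) ^ 2 := Finset.sum_comm
    _ ≤ ∑ _a : Fin n, 100 * (Cθ + 1) * go ^ 2 * Real.sqrt T * L :=
        Finset.sum_le_sum (fun a _ => harc a)
    _ = (n : ℝ) * (100 * (Cθ + 1) * go ^ 2 * Real.sqrt T * L) := by
        rw [Finset.sum_const, Finset.card_univ, Fintype.card_fin, nsmul_eq_mul]
    _ = 100 * (Cθ + 1) * go ^ 2 * (n : ℝ) * Real.sqrt T * L := by ring
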